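/- arXiv:2106.12306 — 6 statements merged into one kernel-verified Lean document; each statement's English description precedes it below -/
import Mathlib

section
/- If an n × n array of nonnegative integers has the property that its 2n line sums (the n row sums together with the n column sums) are exactly the integers 0, 1, 2, ..., 2n−1 in some order, then n is even. -/
/-- If the multiset of the `n` row sums and `n` column sums of an `n × n` array of
nonnegative integers is exactly `{0, 1, ..., 2n-1}`, then `n` is even. -/
theorem square_consecutive_line_sums_even (n : ℕ) (f : Fin n × Fin n → ℕ)
    (h : ((Finset.univ : Finset (Fin n)).val.map fun i => ∑ j, f (i, j)) +
         ((Finset.univ : Finset (Fin n)).val.map fun j => ∑ i, f (i, j)) =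
         Multiset.range (2 * n)) :
    Even n := by
  have hsum := congrArg Multiset.sum h
  rw [Multiset.sum_add] at hsum
  have h1 : ((Finset.univ : Finset (Fin n)).val.map fun i => ∑ j, f (i, j)).sum
      = ∑ i, ∑ j, f (i, j) := rfl
  have h2 : ((Finset.univ : Finset (Fin n)).val.map fun j => ∑ i, f (i, j)).sum
      = ∑ j, ∑ i, f (i, j) := rfl
  have h3 : (Multiset.range (2 * n)).sum = ∑ i ∈ Finset.range (2 * n), i := by
    rw [Finset.sum]; simp
  rw [h1, h2, h3] at hsum
  rw [show (∑ j, ∑ i, f (i, j)) = ∑ i, ∑ j, f (i, j) from Finset.sum_comm] at hsum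
  set S := ∑ i, ∑ j, f (i, j) with hS
  have h4 := Finset.sum_range_id_mul_two (2 * n)
  -- (∑ i in range (2n), i) * 2 = 2n * (2n - 1)
  have h5 : S + S = ∑ i ∈ Finset.range (2 * n), i := hsum
  have h6 : n * (2 * n - 1) = 2 * S := by
    have : (S + S) * 2 = 2 * n * (2 * n - 1) := by rw [h5, h4]
    nlinarith [this]
  have h7 : Even (n * (2 * n - 1)) := ⟨S, h6.trans (two_mul S)⟩
  rcases Nat.even_mul.mp h7 with he | he
  · exact he
  · rcases Nat.eq_zero_or_pos n with h0 | h0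
    · exact h0 ▸ Even.zero
    · exfalso
      rcases he with ⟨k, hk⟩
      omega
end

section
/- For every even positive integer n, there exists an n × n array of nonnegative integers whose 2n line sums (row sums and column sums) are exactly the integers 0, 1, 2, ..., 2n−1 in some order. -/
/-- For every even positive integer `n`, there is an `n × n` array of nonnegative integers
whose `n` row sums together with `n` column sums are exactly `{0, 1, ..., 2n-1}`. -/
theorem exists_square_consecutive_line_sums (n : ℕ) (hn : 0 < n) (he : Even n) :
    ∃ f : Fin n × Fin n → ℕ,
      ((Finset.univ : Finset (Fin n)).val.map fun i => ∑ j, f (i, j)) +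
      ((Finset.univ : Finset (Fin n)).val.map fun j => ∑ i, f (i, j)) =
      Multiset.range (2 * n) := by
  haveI : NeZero n := ⟨hn.ne'⟩
  obtain ⟨k, hk⟩ := he
  have hn2 : 2 ≤ n := by omega
  refine ⟨fun p => (if p.2 = p.1 then 2 * p.1.val else 0) +
      (if p.2 = p.1 + 1 then p.1.val % 2 else 0), ?_⟩
  have hrow : ∀ i : Fin n, ∑ j : Fin n,
      ((if j = i then 2 * i.val else 0) + (if j = i + 1 then i.val % 2 else 0))
      = 2 * i.val + i.val % 2 := by
    intro i
    rw [Finset.sum_add_distrib, Finset.sum_ite_eq' Finset.univ i,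
      Finset.sum_ite_eq' Finset.univ (i + 1)]
    simp
  have hcol : ∀ j : Fin n, ∑ i : Fin n,
      ((if j = i then 2 * i.val else 0) + (if j = i + 1 then i.val % 2 else 0))
      = 2 * j.val + (j - 1 : Fin n).val % 2 := by
    intro j
    have h1 : ∀ i : Fin n, (if j = i then 2 * i.val else 0) =
        (if i = j then 2 * i.val else 0) := fun i => (if_congr eq_comm rfl rfl).symm
    have h2 : ∀ i : Fin n, (if j = i + 1 then i.val % 2 else 0) =
        (if i = j - 1 then i.val % 2 else 0) := fun i =>
      if_congr ⟨fun h => eq_sub_iff_add_eq.mpr h.symm,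
        fun h => (eq_sub_iff_add_eq.mp h).symm⟩ rfl rfl
    simp only [h1, h2]
    rw [Finset.sum_add_distrib, Finset.sum_ite_eq' Finset.univ j,
      Finset.sum_ite_eq' Finset.univ (j - 1)]
    simp
  simp only [hrow, hcol]
  have hsub : (j : Fin n) → ((j - 1 : Fin n).val % 2 = (j.val + 1) % 2) := by
    intro j
    have hj : (j - 1 : Fin n).val = (j.val + (n - 1)) % n := by
      rw [Fin.sub_def]
      simp only [Fin.val_one']
      rw [Nat.mod_eq_of_lt hn2]
      congr 1
      omega
    rw [hj]
    rcases Nat.eq_zero_or_pos j.val with h0 | hpos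
    · rw [h0]
      have : (0 + (n - 1)) % n = n - 1 := by
        rw [Nat.zero_add, Nat.mod_eq_of_lt]; omega
      rw [this]; omega
    · have : (j.val + (n - 1)) % n = j.val - 1 := by
        have hjlt := j.isLt
        rw [show j.val + (n - 1) = (j.val - 1) + n by omega, Nat.add_mod_right,
          Nat.mod_eq_of_lt]; omega
      rw [this]; omega
  refine (Multiset.eq_of_le_of_card_le ?_ ?_).symm
  · rw [Multiset.le_iff_subset (Multiset.nodup_range _)]
    intro m hm
    rw [Multiset.mem_range] at hm
    rw [Multiset.mem_add]
    have hmn : m / 2 < n := by omega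
    rcases eq_or_ne (m / 2 % 2) (m % 2) with hp | hp
    · left
      rw [Multiset.mem_map]
      exact ⟨⟨m / 2, hmn⟩, Finset.mem_univ_val _, by simp; omega⟩
    · right
      rw [Multiset.mem_map]
      refine ⟨⟨m / 2, hmn⟩, Finset.mem_univ_val _, ?_⟩
      rw [hsub]
      show 2 * (m / 2) + (m / 2 + 1) % 2 = m
      omega
  · simp [Multiset.card_add]
    omega
end

section
/- If there exists a Sarvate–Beam cube of order n, then for every positive integer m there exists a Sarvate–Beam cube of order mn. -/
/-- The multiset of all `3n²` axis-parallel line sums of a cube `f`. -/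
def cubeLineSums (n : ℕ) (f : Fin n × Fin n × Fin n → ℕ) : Multiset ℕ :=
  ((Finset.univ : Finset (Fin n × Fin n)).val.map fun p => ∑ k, f (p.1, p.2, k)) +
  ((Finset.univ : Finset (Fin n × Fin n)).val.map fun p => ∑ j, f (p.1, j, p.2)) +
  ((Finset.univ : Finset (Fin n × Fin n)).val.map fun p => ∑ i, f (i, p.1, p.2))

/-- A Sarvate–Beam cube of order `n`: line sums are exactly `0, 1, ..., 3n²-1`. -/
def IsSBC (n : ℕ) (f : Fin n × Fin n × Fin n → ℕ) : Prop :=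
  cubeLineSums n f = Multiset.range (3 * n ^ 2)

namespace SBCmul

/-- indicator of `m ≤ x + k` -/
def ind (m x k : ℕ) : ℕ := if m ≤ x + k then 1 else 0

lemma ind_comm (m x k : ℕ) : ind m x k = ind m k x := by simp [ind, Nat.add_comm]

lemma sum_ind (m j : ℕ) (hj : j < m) : (∑ x : Fin m, ind m ↑x j) = j := by
  rw [Fin.sum_univ_eq_sum_range (fun x => ind m x j) m]
  unfold ind
  rw [← Finset.sum_filter]
  have h : (Finset.range m).filter (fun x => m ≤ x + j) = Finset.Ico (m - j) m := by
    ext x; simp only [Finset.mem_filter, Finset.mem_Ico, Finset.mem_range]; omega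
  rw [h]
  simp only [Finset.sum_const, smul_eq_mul, mul_one, Nat.card_Ico]
  omega

lemma sum_ind_fin (m : ℕ) (x : Fin m) : (∑ k : Fin m, ind m ↑x ↑k) = ↑x := by
  calc ∑ k : Fin m, ind m ↑x ↑k = ∑ k : Fin m, ind m ↑k ↑x := by
        refine Finset.sum_congr rfl fun k _ => ind_comm m ↑x ↑k
    _ = ↑x := sum_ind m ↑x x.isLt

section H
variable (m : ℕ) [NeZero m]

def Hc (a b c : Fin m) : ℕ := ind m ↑b ↑(a + c) + m * ind m ↑a ↑(b + c)

lemma sum_shift_left (x a : Fin m) : (∑ c : Fin m, ind m ↑x ↑(a + c)) = ↑x := by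
  have h := Equiv.sum_comp (Equiv.addLeft a) (fun k : Fin m => ind m ↑x ↑k)
  simp only [Equiv.coe_addLeft] at h
  rw [h]; exact sum_ind_fin m x

lemma sum_shift_right (x c : Fin m) : (∑ b : Fin m, ind m ↑x ↑(b + c)) = ↑x := by
  have h := Equiv.sum_comp (Equiv.addRight c) (fun k : Fin m => ind m ↑x ↑k)
  simp only [Equiv.coe_addRight] at h
  rw [h]; exact sum_ind_fin m x

lemma sumH_c (a b : Fin m) : (∑ c, Hc m a b c) = ↑b + m * ↑a := by
  unfold Hc
  rw [Finset.sum_add_distrib, ← Finset.mul_sum, sum_shift_left m b a, sum_shift_left m a b]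

lemma sumH_b (a c : Fin m) : (∑ b, Hc m a b c) = ↑(a + c) + m * ↑a := by
  unfold Hc
  rw [Finset.sum_add_distrib, ← Finset.mul_sum, sum_ind m ↑(a+c) (a+c).isLt,
    sum_shift_right m a c]

lemma sumH_a (b c : Fin m) : (∑ a, Hc m a b c) = ↑b + m * ↑(b + c) := by
  unfold Hc
  rw [Finset.sum_add_distrib, ← Finset.mul_sum, sum_shift_right m b c]
  congr 1
  have : (∑ a : Fin m, ind m ↑a ↑(b + c)) = ∑ a : Fin m, ind m ↑(b+c) ↑a :=
    Finset.sum_congr rfl fun k _ => ind_comm m ↑k ↑(b+c)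
  rw [this, sum_ind_fin m (b + c)]

end H

section Z
variable (n : ℕ) [NeZero n]

def zf (r s t : Fin n) : ℕ := if r + s + t = 0 then 1 else 0

omit [NeZero n] in
lemma sum_one_eq (w : Fin n) : (∑ t : Fin n, (if t = w then 1 else 0 : ℕ)) = 1 := by
  rw [Finset.sum_ite_eq' Finset.univ w (fun _ => (1:ℕ))]
  simp

lemma sum_z_t (r s : Fin n) : (∑ t, zf n r s t) = 1 := by
  unfold zf
  have h : ∀ t : Fin n, (r + s + t = 0) = (t = -(r+s)) := by
    intro t; ext
    constructor
    · intro h; exact eq_neg_of_add_eq_zero_right h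
    · rintro rfl; exact add_neg_cancel _
  simp_rw [h]
  exact sum_one_eq n _

lemma sum_z_s (r t : Fin n) : (∑ s, zf n r s t) = 1 := by
  unfold zf
  have h : ∀ s : Fin n, (r + s + t = 0) = (s = -(r+t)) := by
    intro s; ext
    rw [add_right_comm]
    constructor
    · intro h; exact eq_neg_of_add_eq_zero_right h
    · rintro rfl; exact add_neg_cancel _
  simp_rw [h]
  exact sum_one_eq n _

lemma sum_z_r (s t : Fin n) : (∑ r, zf n r s t) = 1 := by
  unfold zf
  have h : ∀ r : Fin n, (r + s + t = 0) = (r = -(s+t)) := by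
    intro r; ext
    rw [add_rotate]
    constructor
    · intro h; exact eq_neg_of_add_eq_zero_right h
    · rintro rfl; exact add_neg_cancel _
  simp_rw [h]
  exact sum_one_eq n _

end Z


section G
variable (m n : ℕ) [NeZero m] [NeZero n] (f : Fin n × Fin n × Fin n → ℕ)

def g0 (x y w : Fin m × Fin n) : ℕ :=
  (if w.1 = x.1 + y.1 then f (x.2, y.2, w.2) else 0) +
    3 * n ^ 2 * (Hc m x.1 y.1 w.1 * zf n x.2 y.2 w.2)

lemma dsum3 (a b : Fin m) (r s : Fin n) :
    (∑ w : Fin m × Fin n, g0 m n f (a, r) (b, s) w) =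
      (∑ t, f (r, s, t)) + 3 * n ^ 2 * (↑b + m * ↑a) := by
  unfold g0
  rw [Finset.sum_add_distrib]
  congr 1
  · rw [Fintype.sum_prod_type]
    have h1 : ∀ c : Fin m, (∑ t : Fin n,
        if c = a + b then f (r, s, t) else 0) = (if c = a + b then ∑ t, f (r, s, t) else 0) := by
      intro c; split <;> simp
    simp_rw [h1]
    rw [Finset.sum_ite_eq' Finset.univ (a + b) (fun _ => ∑ t, f (r, s, t))]
    simp
  · rw [Fintype.sum_prod_type]
    have h2 : ∀ c : Fin m, (∑ t : Fin n, 3 * n ^ 2 * (Hc m a b c * zf n r s t)) =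
        3 * n ^ 2 * Hc m a b c := by
      intro c
      rw [← Finset.mul_sum]
      have : (∑ t : Fin n, Hc m a b c * zf n r s t) = Hc m a b c * ∑ t, zf n r s t := by
        rw [Finset.mul_sum]
      rw [this, sum_z_t, mul_one]
    simp_rw [h2]
    rw [← Finset.mul_sum, sumH_c]

lemma dsum2 (a c : Fin m) (r t : Fin n) :
    (∑ y : Fin m × Fin n, g0 m n f (a, r) y (c, t)) =
      (∑ s, f (r, s, t)) + 3 * n ^ 2 * (↑(a + c) + m * ↑a) := by
  unfold g0
  rw [Finset.sum_add_distrib]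
  congr 1
  · rw [Fintype.sum_prod_type]
    have hcond : ∀ b : Fin m, (c = a + b) = (b = -a + c) := by
      intro b; ext
      constructor
      · rintro rfl; rw [neg_add_cancel_left]
      · rintro rfl; rw [add_neg_cancel_left]
    have h1 : ∀ b : Fin m, (∑ s : Fin n,
        if c = a + b then f (r, s, t) else 0) = (if b = -a + c then ∑ s, f (r, s, t) else 0) := by
      intro b; simp only [hcond b]; split <;> simp
    simp_rw [h1]
    rw [Finset.sum_ite_eq' Finset.univ (-a + c) (fun _ => ∑ s, f (r, s, t))]
    simp
  · rw [Fintype.sum_prod_type]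
    have h2 : ∀ b : Fin m, (∑ s : Fin n, 3 * n ^ 2 * (Hc m a b c * zf n r s t)) =
        3 * n ^ 2 * Hc m a b c := by
      intro b
      rw [← Finset.mul_sum, ← Finset.mul_sum, sum_z_s, mul_one]
    simp_rw [h2]
    rw [← Finset.mul_sum, sumH_b]

lemma dsum1 (b c : Fin m) (s t : Fin n) :
    (∑ x : Fin m × Fin n, g0 m n f x (b, s) (c, t)) =
      (∑ r, f (r, s, t)) + 3 * n ^ 2 * (↑b + m * ↑(b + c)) := by
  unfold g0
  rw [Finset.sum_add_distrib]
  congr 1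
  · rw [Fintype.sum_prod_type]
    have hcond : ∀ a : Fin m, (c = a + b) = (a = c - b) := by
      intro a; ext
      constructor
      · rintro rfl; rw [add_sub_cancel_right]
      · rintro rfl; rw [sub_add_cancel]
    have h1 : ∀ a : Fin m, (∑ r : Fin n,
        if c = a + b then f (r, s, t) else 0) = (if a = c - b then ∑ r, f (r, s, t) else 0) := by
      intro a; simp only [hcond a]; split <;> simp
    simp_rw [h1]
    rw [Finset.sum_ite_eq' Finset.univ (c - b) (fun _ => ∑ r, f (r, s, t))]
    simp
  · rw [Fintype.sum_prod_type]
    have h2 : ∀ a : Fin m, (∑ r : Fin n, 3 * n ^ 2 * (Hc m a b c * zf n r s t)) =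
        3 * n ^ 2 * Hc m a b c := by
      intro a
      rw [← Finset.mul_sum, ← Finset.mul_sum, sum_z_r, mul_one]
    simp_rw [h2]
    rw [← Finset.mul_sum, sumH_a]
end G

section MS

lemma map_univ_comp {α β γ : Type*} [Fintype α] [Fintype β] (e : α ≃ β) (F : β → γ) :
    ((Finset.univ : Finset α).val.map fun a => F (e a)) =
      (Finset.univ : Finset β).val.map F := by
  have h : (Finset.univ : Finset α).val.map ⇑e = (Finset.univ : Finset β).val := by
    rw [show ⇑e = ⇑e.toEmbedding from rfl, ← Finset.map_val, Finset.map_univ_equiv]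
  calc ((Finset.univ : Finset α).val.map fun a => F (e a))
      = ((Finset.univ : Finset α).val.map ⇑e).map F := by rw [Multiset.map_map]; rfl
    _ = (Finset.univ : Finset β).val.map F := by rw [h]

lemma map_univ_prod {α β γ : Type*} [Fintype α] [Fintype β] (F : α × β → γ) :
    ((Finset.univ : Finset (α × β)).val.map F) =
      (Finset.univ : Finset α).val.bind
        (fun a => (Finset.univ : Finset β).val.map (fun b => F (a, b))) := by
  rw [← Finset.univ_product_univ, Finset.product_val]
  show Multiset.map F (Multiset.product _ _) = _
  rw [Multiset.product, Multiset.map_bind]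
  simp [Multiset.map_map, Function.comp]

lemma fin_univ_val (m : ℕ) :
    (Finset.univ : Finset (Fin m)).val.map Fin.val = Multiset.range m := by
  rw [Fin.univ_val_map]
  show ((List.ofFn Fin.val : List ℕ) : Multiset ℕ) = _
  rw [List.ofFn_eq_map, List.map_coe_finRange_eq_range]
  rfl

lemma range_mul (a b : ℕ) :
    Multiset.range (a * b) =
      (Multiset.range a).bind (fun q => (Multiset.range b).map (fun r => r + b * q)) := by
  induction a with
  | zero => simp
  | succ a ih =>
    rw [Nat.succ_mul, Multiset.range_add, Multiset.range_succ, Multiset.cons_bind, ih]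
    rw [add_comm]
    congr 1
    refine Multiset.map_congr rfl fun r _ => ?_
    ring

lemma L3 (m : ℕ) :
    ((Finset.univ : Finset (Fin m × Fin m)).val.map fun p => (↑p.2 + m * ↑p.1 : ℕ)) =
      Multiset.range (m * m) := by
  rw [map_univ_prod, range_mul]
  rw [← fin_univ_val m, Multiset.bind_map]
  refine Multiset.bind_congr fun a _ => ?_
  rw [Multiset.map_map]
  rfl

end MS

section Main
variable (m n : ℕ) [NeZero m] [NeZero n] (f : Fin n × Fin n × Fin n → ℕ)

/-- abbreviations -/
def kap3 (m : ℕ) : Fin m × Fin m → ℕ := fun p => ↑p.2 + m * ↑p.1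

lemma comp3 :
    ((Finset.univ : Finset (Fin (m*n) × Fin (m*n))).val.map fun p =>
        ∑ k : Fin (m*n), g0 m n f (finProdFinEquiv.symm p.1) (finProdFinEquiv.symm p.2)
          (finProdFinEquiv.symm k)) =
      (Multiset.range (m*m)).bind (fun q =>
        (((Finset.univ : Finset (Fin n × Fin n)).val.map fun p => ∑ t, f (p.1, p.2, t)).map
          (fun w => w + 3*n^2*q))) := by
  set E := (finProdFinEquiv : Fin m × Fin n ≃ Fin (m*n)) with hE
  calc ((Finset.univ : Finset (Fin (m*n) × Fin (m*n))).val.map fun p =>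
        ∑ k : Fin (m*n), g0 m n f (E.symm p.1) (E.symm p.2) (E.symm k))
      = ((Finset.univ : Finset ((Fin m × Fin n) × (Fin m × Fin n))).val.map fun q =>
          ∑ k : Fin (m*n), g0 m n f (E.symm ((E.prodCongr E) q).1)
            (E.symm ((E.prodCongr E) q).2) (E.symm k)) :=
        (map_univ_comp (E.prodCongr E) _).symm
    _ = ((Finset.univ : Finset ((Fin m × Fin n) × (Fin m × Fin n))).val.map fun q =>
          (∑ t, f (q.1.2, q.2.2, t)) + 3*n^2*(↑q.2.1 + m * ↑q.1.1)) := by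
        refine Multiset.map_congr rfl fun q _ => ?_
        obtain ⟨⟨a,r⟩,⟨b,s⟩⟩ := q
        simp only [Equiv.prodCongr_apply, Prod.map_fst, Prod.map_snd, Equiv.symm_apply_apply]
        rw [Equiv.sum_comp E.symm (fun w => g0 m n f (a,r) (b,s) w)]
        exact dsum3 m n f a b r s
    _ = ((Finset.univ : Finset ((Fin m × Fin m) × (Fin n × Fin n))).val.map fun pq =>
          (∑ t, f (pq.2.1, pq.2.2, t)) + 3*n^2*(↑pq.1.2 + m * ↑pq.1.1)) := by
        refine ((map_univ_comp (Equiv.prodProdProdComm (Fin m) (Fin n) (Fin m) (Fin n)).symm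
          _).symm).trans ?_
        refine Multiset.map_congr rfl fun pq _ => ?_
        obtain ⟨⟨x,y⟩,⟨u,v⟩⟩ := pq
        simp [Equiv.prodProdProdComm]
    _ = (Finset.univ : Finset (Fin m × Fin m)).val.bind (fun p =>
          ((Finset.univ : Finset (Fin n × Fin n)).val.map fun uv =>
            (∑ t, f (uv.1, uv.2, t)) + 3*n^2*(↑p.2 + m * ↑p.1))) := map_univ_prod _
    _ = (Finset.univ : Finset (Fin m × Fin m)).val.bind (fun p =>
          (((Finset.univ : Finset (Fin n × Fin n)).val.map fun p => ∑ t, f (p.1, p.2, t)).map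
            (fun w => w + 3*n^2*(kap3 m p)))) := by
        refine Multiset.bind_congr fun p _ => ?_
        rw [Multiset.map_map]
        rfl
    _ = (((Finset.univ : Finset (Fin m × Fin m)).val.map (kap3 m)).bind (fun q =>
          (((Finset.univ : Finset (Fin n × Fin n)).val.map fun p => ∑ t, f (p.1, p.2, t)).map
            (fun w => w + 3*n^2*q)))) :=
        (Multiset.bind_map Finset.univ.val (fun q =>
          (((Finset.univ : Finset (Fin n × Fin n)).val.map fun p => ∑ t, f (p.1, p.2, t)).map
            (fun w => w + 3*n^2*q))) (kap3 m)).symm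
    _ = (Multiset.range (m*m)).bind (fun q =>
          (((Finset.univ : Finset (Fin n × Fin n)).val.map fun p => ∑ t, f (p.1, p.2, t)).map
            (fun w => w + 3*n^2*q))) := by rw [show Finset.univ.val.map (kap3 m) =
              Multiset.range (m*m) from L3 m]

lemma mapk2 : ((Finset.univ : Finset (Fin m × Fin m)).val.map
    fun p => (↑(p.1 + p.2) + m * ↑p.1 : ℕ)) = Multiset.range (m*m) := by
  have h : (fun p : Fin m × Fin m => (↑(p.1 + p.2) + m * ↑p.1 : ℕ)) =
      fun p => kap3 m ((Equiv.prodShear (Equiv.refl (Fin m)) (fun a => Equiv.addLeft a)) p) := by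
    funext p
    simp [kap3, Equiv.prodShear]
  rw [h, map_univ_comp (Equiv.prodShear (Equiv.refl (Fin m)) (fun a => Equiv.addLeft a)) (kap3 m)]
  exact L3 m

lemma mapk1 : ((Finset.univ : Finset (Fin m × Fin m)).val.map
    fun p => (↑p.1 + m * ↑(p.1 + p.2) : ℕ)) = Multiset.range (m*m) := by
  have h : (fun p : Fin m × Fin m => (↑p.1 + m * ↑(p.1 + p.2) : ℕ)) =
      fun p => kap3 m (((Equiv.prodShear (Equiv.refl (Fin m))
        (fun a => Equiv.addLeft a)).trans (Equiv.prodComm _ _)) p) := by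
    funext p
    simp [kap3, Equiv.prodShear]
  rw [h, map_univ_comp ((Equiv.prodShear (Equiv.refl (Fin m))
    (fun a => Equiv.addLeft a)).trans (Equiv.prodComm _ _)) (kap3 m)]
  exact L3 m

lemma comp2 :
    ((Finset.univ : Finset (Fin (m*n) × Fin (m*n))).val.map fun p =>
        ∑ j : Fin (m*n), g0 m n f (finProdFinEquiv.symm p.1) (finProdFinEquiv.symm j)
          (finProdFinEquiv.symm p.2)) =
      (Multiset.range (m*m)).bind (fun q =>
        (((Finset.univ : Finset (Fin n × Fin n)).val.map fun p => ∑ s, f (p.1, s, p.2)).map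
          (fun w => w + 3*n^2*q))) := by
  set E := (finProdFinEquiv : Fin m × Fin n ≃ Fin (m*n)) with hE
  calc ((Finset.univ : Finset (Fin (m*n) × Fin (m*n))).val.map fun p =>
        ∑ j : Fin (m*n), g0 m n f (E.symm p.1) (E.symm j) (E.symm p.2))
      = ((Finset.univ : Finset ((Fin m × Fin n) × (Fin m × Fin n))).val.map fun q =>
          ∑ j : Fin (m*n), g0 m n f (E.symm ((E.prodCongr E) q).1) (E.symm j)
            (E.symm ((E.prodCongr E) q).2)) :=
        (map_univ_comp (E.prodCongr E) _).symm
    _ = ((Finset.univ : Finset ((Fin m × Fin n) × (Fin m × Fin n))).val.map fun q =>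
          (∑ s, f (q.1.2, s, q.2.2)) + 3*n^2*(↑(q.1.1 + q.2.1) + m * ↑q.1.1)) := by
        refine Multiset.map_congr rfl fun q _ => ?_
        obtain ⟨⟨a,r⟩,⟨c,t⟩⟩ := q
        simp only [Equiv.prodCongr_apply, Prod.map_fst, Prod.map_snd, Equiv.symm_apply_apply]
        rw [Equiv.sum_comp E.symm (fun y => g0 m n f (a,r) y (c,t))]
        exact dsum2 m n f a c r t
    _ = ((Finset.univ : Finset ((Fin m × Fin m) × (Fin n × Fin n))).val.map fun pq =>
          (∑ s, f (pq.2.1, s, pq.2.2)) + 3*n^2*(↑(pq.1.1 + pq.1.2) + m * ↑pq.1.1)) := by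
        refine ((map_univ_comp (Equiv.prodProdProdComm (Fin m) (Fin n) (Fin m) (Fin n)).symm
          _).symm).trans ?_
        refine Multiset.map_congr rfl fun pq _ => ?_
        obtain ⟨⟨x,y⟩,⟨u,v⟩⟩ := pq
        simp [Equiv.prodProdProdComm]
    _ = (Finset.univ : Finset (Fin m × Fin m)).val.bind (fun p =>
          ((Finset.univ : Finset (Fin n × Fin n)).val.map fun uv =>
            (∑ s, f (uv.1, s, uv.2)) + 3*n^2*(↑(p.1 + p.2) + m * ↑p.1))) := map_univ_prod _
    _ = (Finset.univ : Finset (Fin m × Fin m)).val.bind (fun p =>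
          (((Finset.univ : Finset (Fin n × Fin n)).val.map fun p => ∑ s, f (p.1, s, p.2)).map
            (fun w => w + 3*n^2*(↑(p.1 + p.2) + m * ↑p.1)))) := by
        refine Multiset.bind_congr fun p _ => ?_
        rw [Multiset.map_map]
        rfl
    _ = (((Finset.univ : Finset (Fin m × Fin m)).val.map
          (fun p : Fin m × Fin m => (↑(p.1 + p.2) + m * ↑p.1 : ℕ))).bind (fun q =>
          (((Finset.univ : Finset (Fin n × Fin n)).val.map fun p => ∑ s, f (p.1, s, p.2)).map
            (fun w => w + 3*n^2*q)))) :=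
        (Multiset.bind_map Finset.univ.val (fun q =>
          (((Finset.univ : Finset (Fin n × Fin n)).val.map fun p => ∑ s, f (p.1, s, p.2)).map
            (fun w => w + 3*n^2*q)))
          (fun p : Fin m × Fin m => (↑(p.1 + p.2) + m * ↑p.1 : ℕ))).symm
    _ = (Multiset.range (m*m)).bind (fun q =>
          (((Finset.univ : Finset (Fin n × Fin n)).val.map fun p => ∑ s, f (p.1, s, p.2)).map
            (fun w => w + 3*n^2*q))) := by rw [mapk2]

lemma comp1 :
    ((Finset.univ : Finset (Fin (m*n) × Fin (m*n))).val.map fun p =>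
        ∑ i : Fin (m*n), g0 m n f (finProdFinEquiv.symm i) (finProdFinEquiv.symm p.1)
          (finProdFinEquiv.symm p.2)) =
      (Multiset.range (m*m)).bind (fun q =>
        (((Finset.univ : Finset (Fin n × Fin n)).val.map fun p => ∑ r, f (r, p.1, p.2)).map
          (fun w => w + 3*n^2*q))) := by
  set E := (finProdFinEquiv : Fin m × Fin n ≃ Fin (m*n)) with hE
  calc ((Finset.univ : Finset (Fin (m*n) × Fin (m*n))).val.map fun p =>
        ∑ i : Fin (m*n), g0 m n f (E.symm i) (E.symm p.1) (E.symm p.2))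
      = ((Finset.univ : Finset ((Fin m × Fin n) × (Fin m × Fin n))).val.map fun q =>
          ∑ i : Fin (m*n), g0 m n f (E.symm i) (E.symm ((E.prodCongr E) q).1)
            (E.symm ((E.prodCongr E) q).2)) :=
        (map_univ_comp (E.prodCongr E) _).symm
    _ = ((Finset.univ : Finset ((Fin m × Fin n) × (Fin m × Fin n))).val.map fun q =>
          (∑ r, f (r, q.1.2, q.2.2)) + 3*n^2*(↑q.1.1 + m * ↑(q.1.1 + q.2.1))) := by
        refine Multiset.map_congr rfl fun q _ => ?_
        obtain ⟨⟨b,s⟩,⟨c,t⟩⟩ := q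
        simp only [Equiv.prodCongr_apply, Prod.map_fst, Prod.map_snd, Equiv.symm_apply_apply]
        rw [Equiv.sum_comp E.symm (fun x => g0 m n f x (b,s) (c,t))]
        exact dsum1 m n f b c s t
    _ = ((Finset.univ : Finset ((Fin m × Fin m) × (Fin n × Fin n))).val.map fun pq =>
          (∑ r, f (r, pq.2.1, pq.2.2)) + 3*n^2*(↑pq.1.1 + m * ↑(pq.1.1 + pq.1.2))) := by
        refine ((map_univ_comp (Equiv.prodProdProdComm (Fin m) (Fin n) (Fin m) (Fin n)).symm
          _).symm).trans ?_
        refine Multiset.map_congr rfl fun pq _ => ?_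
        obtain ⟨⟨x,y⟩,⟨u,v⟩⟩ := pq
        simp [Equiv.prodProdProdComm]
    _ = (Finset.univ : Finset (Fin m × Fin m)).val.bind (fun p =>
          ((Finset.univ : Finset (Fin n × Fin n)).val.map fun uv =>
            (∑ r, f (r, uv.1, uv.2)) + 3*n^2*(↑p.1 + m * ↑(p.1 + p.2)))) := map_univ_prod _
    _ = (Finset.univ : Finset (Fin m × Fin m)).val.bind (fun p =>
          (((Finset.univ : Finset (Fin n × Fin n)).val.map fun p => ∑ r, f (r, p.1, p.2)).map
            (fun w => w + 3*n^2*(↑p.1 + m * ↑(p.1 + p.2))))) := by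
        refine Multiset.bind_congr fun p _ => ?_
        rw [Multiset.map_map]
        rfl
    _ = (((Finset.univ : Finset (Fin m × Fin m)).val.map
          (fun p : Fin m × Fin m => (↑p.1 + m * ↑(p.1 + p.2) : ℕ))).bind (fun q =>
          (((Finset.univ : Finset (Fin n × Fin n)).val.map fun p => ∑ r, f (r, p.1, p.2)).map
            (fun w => w + 3*n^2*q)))) :=
        (Multiset.bind_map Finset.univ.val (fun q =>
          (((Finset.univ : Finset (Fin n × Fin n)).val.map fun p => ∑ r, f (r, p.1, p.2)).map
            (fun w => w + 3*n^2*q)))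
          (fun p : Fin m × Fin m => (↑p.1 + m * ↑(p.1 + p.2) : ℕ))).symm
    _ = (Multiset.range (m*m)).bind (fun q =>
          (((Finset.univ : Finset (Fin n × Fin n)).val.map fun p => ∑ r, f (r, p.1, p.2)).map
            (fun w => w + 3*n^2*q))) := by rw [mapk1]

lemma main (hf : IsSBC n f) : ∃ g, IsSBC (m * n) g := by
  refine ⟨fun x => g0 m n f (finProdFinEquiv.symm x.1) (finProdFinEquiv.symm x.2.1)
    (finProdFinEquiv.symm x.2.2), ?_⟩
  unfold IsSBC cubeLineSums
  show ((Finset.univ : Finset (Fin (m*n) × Fin (m*n))).val.map fun p =>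
        ∑ k : Fin (m*n), g0 m n f (finProdFinEquiv.symm p.1) (finProdFinEquiv.symm p.2)
          (finProdFinEquiv.symm k)) +
      ((Finset.univ : Finset (Fin (m*n) × Fin (m*n))).val.map fun p =>
        ∑ j : Fin (m*n), g0 m n f (finProdFinEquiv.symm p.1) (finProdFinEquiv.symm j)
          (finProdFinEquiv.symm p.2)) +
      ((Finset.univ : Finset (Fin (m*n) × Fin (m*n))).val.map fun p =>
        ∑ i : Fin (m*n), g0 m n f (finProdFinEquiv.symm i) (finProdFinEquiv.symm p.1)
          (finProdFinEquiv.symm p.2)) = Multiset.range (3 * (m*n)^2)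
  rw [comp3 m n f, comp2 m n f, comp1 m n f]
  rw [← Multiset.bind_add, ← Multiset.bind_add]
  have hD : ((Finset.univ : Finset (Fin n × Fin n)).val.map fun p => ∑ t, f (p.1, p.2, t)) +
      ((Finset.univ : Finset (Fin n × Fin n)).val.map fun p => ∑ s, f (p.1, s, p.2)) +
      ((Finset.univ : Finset (Fin n × Fin n)).val.map fun p => ∑ r, f (r, p.1, p.2)) =
      Multiset.range (3 * n ^ 2) := hf
  calc ((Multiset.range (m*m)).bind fun q =>
        ((((Finset.univ : Finset (Fin n × Fin n)).val.map fun p => ∑ t, f (p.1, p.2, t)).map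
          (fun w => w + 3*n^2*q)) +
        (((Finset.univ : Finset (Fin n × Fin n)).val.map fun p => ∑ s, f (p.1, s, p.2)).map
          (fun w => w + 3*n^2*q))) +
        (((Finset.univ : Finset (Fin n × Fin n)).val.map fun p => ∑ r, f (r, p.1, p.2)).map
          (fun w => w + 3*n^2*q)))
      = (Multiset.range (m*m)).bind fun q =>
          (Multiset.range (3 * n ^ 2)).map (fun w => w + 3*n^2*q) := by
        refine Multiset.bind_congr fun q _ => ?_
        rw [← Multiset.map_add, ← Multiset.map_add, hD]
    _ = Multiset.range (3 * (m*n)^2) := by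
        rw [show (3 * (m*n)^2) = (m*m)*(3*n^2) by ring]
        exact (range_mul (m*m) (3*n^2)).symm

end Main

end SBCmul


/-- If a Sarvate–Beam cube of order `n` exists, then one of order `m * n` exists
for every positive integer `m`. -/
theorem sbc_multiply (n : ℕ) (h : ∃ f, IsSBC n f) (m : ℕ) (hm : 0 < m) :
    ∃ g, IsSBC (m * n) g := by
  rcases n with _ | k
  · rw [Nat.mul_zero]
    exact ⟨fun _ => 0, by simp [IsSBC, cubeLineSums]⟩
  · obtain ⟨f, hf⟩ := h
    haveI : NeZero m := ⟨hm.ne'⟩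
    exact SBCmul.main m (k+1) f hf
end

section
/- For every positive integer n with n ≠ 2, there exists an idempotent Latin square of order n, i.e., a Latin square L with L(i,i) = i for all i. -/
section Aux

variable {m : ℕ} [NeZero m]

private lemma half_spec (hm : Odd m) :
    (2 : ZMod m) * ((m + 1) / 2 : ℕ) = 1 := by
  have h1 : ((2 * ((m + 1) / 2) : ℕ) : ZMod m) = ((m + 1 : ℕ) : ZMod m) := by
    congr 1
    obtain ⟨k, rfl⟩ := hm
    omega
  have h2 : ((m + 1 : ℕ) : ZMod m) = 1 := by
    push_cast
    simp
  push_cast at h1 h2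
  rw [h1, h2]

private lemma ils_odd (hm : Odd m) :
    ∃ L : ZMod m × ZMod m → ZMod m,
      (∀ i, Function.Bijective fun j => L (i, j)) ∧
      (∀ j, Function.Bijective fun i => L (i, j)) ∧
      (∀ i, L (i, i) = i) := by
  obtain ⟨h, h2⟩ : ∃ h : ZMod m, (2 : ZMod m) * h = 1 := ⟨_, half_spec hm⟩
  have hcancel : ∀ x y : ZMod m, x * h = y * h → x = y := by
    intro x y hxy
    have := congrArg (· * 2) hxy
    simpa [mul_assoc, mul_comm h 2, h2] using this
  refine ⟨fun p => (p.1 + p.2) * h, ?_, ?_, ?_⟩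
  · intro i
    rw [← Finite.injective_iff_bijective]
    intro a b hab
    exact add_left_cancel (hcancel _ _ hab)
  · intro j
    rw [← Finite.injective_iff_bijective]
    intro a b hab
    exact add_right_cancel (hcancel _ _ hab)
  · intro i
    show (i + i) * h = i
    have : (i + i) * h = i * (2 * h) := by ring
    rw [this, h2, mul_one]

private def pro (m : ℕ) [NeZero m] (h : ZMod m) :
    Option (ZMod m) × Option (ZMod m) → Option (ZMod m)
  | (some i, some j) => if j = i + 1 then none else some ((i + j) * h)
  | (some i, none) => some ((2 * i + 1) * h)
  | (none, some j) => some ((2 * j - 1) * h)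
  | (none, none) => none

private lemma ils_even (hm : Odd m) (hm3 : 3 ≤ m) :
    ∃ L : Option (ZMod m) × Option (ZMod m) → Option (ZMod m),
      (∀ i, Function.Bijective fun j => L (i, j)) ∧
      (∀ j, Function.Bijective fun i => L (i, j)) ∧
      (∀ i, L (i, i) = i) := by
  haveI : Fact (1 < m) := ⟨by omega⟩
  obtain ⟨h, h2⟩ : ∃ h : ZMod m, (2 : ZMod m) * h = 1 := ⟨_, half_spec hm⟩
  have hcancel : ∀ x y : ZMod m, x * h = y * h → x = y := by
    intro x y hxy
    have := congrArg (· * 2) hxy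
    simpa [mul_assoc, mul_comm h 2, h2] using this
  have htwo : ∀ x y : ZMod m, 2 * x = 2 * y → x = y := by
    intro x y hxy
    have := congrArg (h * ·) hxy
    simpa [← mul_assoc, mul_comm h 2, h2] using this
  refine ⟨pro m h, ?_, ?_, ?_⟩
  · rintro (_ | i)
    · -- row none : j ↦ (2j-1)h, none ↦ none
      rw [← Finite.injective_iff_bijective]
      rintro (_ | a) (_ | b) hab
      · rfl
      · exact absurd hab (by simp [pro])
      · exact absurd hab (by simp [pro])
      · simp only [pro, Option.some.injEq] at hab
        have h1 : (2 : ZMod m) * a - 1 = 2 * b - 1 := hcancel _ _ hab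
        have h3 : (2 : ZMod m) * a = 2 * b := by linear_combination h1
        rw [htwo _ _ h3]
    · -- row some i
      rw [← Finite.injective_iff_bijective]
      rintro (_ | a) (_ | b) hab
      · rfl
      · simp only [pro] at hab
        split_ifs at hab with hb
        simp only [Option.some.injEq] at hab
        have : i + b = 2 * i + 1 := hcancel _ _ hab.symm
        exact absurd (by linear_combination this) hb
      · simp only [pro] at hab
        split_ifs at hab with ha
        simp only [Option.some.injEq] at hab
        have : i + a = 2 * i + 1 := hcancel _ _ hab
        exact absurd (by linear_combination this) ha
      · simp only [pro] at hab
        split_ifs at hab with ha hb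
        · rw [ha, hb]
        · simp only [Option.some.injEq] at hab
          have := hcancel _ _ hab
          have : a = b := by linear_combination this
          rw [this]
  · rintro (_ | j)
    · -- column none : i ↦ (2i+1)h
      rw [← Finite.injective_iff_bijective]
      rintro (_ | a) (_ | b) hab
      · rfl
      · exact absurd hab (by simp [pro])
      · exact absurd hab (by simp [pro])
      · simp only [pro, Option.some.injEq] at hab
        have h1 : (2 : ZMod m) * a + 1 = 2 * b + 1 := hcancel _ _ hab
        have h3 : (2 : ZMod m) * a = 2 * b := by linear_combination h1
        rw [htwo _ _ h3]
    · -- column some j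
      rw [← Finite.injective_iff_bijective]
      rintro (_ | a) (_ | b) hab
      · rfl
      · simp only [pro] at hab
        split_ifs at hab with hb
        simp only [Option.some.injEq] at hab
        have : 2 * j - 1 = b + j := hcancel _ _ hab
        exact absurd (by linear_combination this) hb
      · simp only [pro] at hab
        split_ifs at hab with ha
        simp only [Option.some.injEq] at hab
        have : a + j = 2 * j - 1 := hcancel _ _ hab
        exact absurd (by linear_combination -this) ha
      · simp only [pro] at hab
        split_ifs at hab with ha hb
        · have : a = b := by rw [ha] at hb; linear_combination hb
          rw [this]
        · simp only [Option.some.injEq] at hab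
          have := hcancel _ _ hab
          have : a = b := by linear_combination this
          rw [this]
  · rintro (_ | i)
    · rfl
    · simp only [pro]
      have hne : ¬ (i = i + 1) := by
        intro hcon
        have : (1 : ZMod m) = 0 := by linear_combination -hcon
        exact one_ne_zero this
      rw [if_neg hne]
      have : (i + i) * h = i * (2 * h) := by ring
      rw [this, h2, mul_one]

private lemma ils_transport {α : Type*} {n : ℕ} (e : α ≃ Fin n)
    (hL : ∃ L : α × α → α,
      (∀ i, Function.Bijective fun j => L (i, j)) ∧
      (∀ j, Function.Bijective fun i => L (i, j)) ∧
      (∀ i, L (i, i) = i)) :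
    ∃ L : Fin n × Fin n → Fin n,
      (∀ i, Function.Bijective fun j => L (i, j)) ∧
      (∀ j, Function.Bijective fun i => L (i, j)) ∧
      (∀ i, L (i, i) = i) := by
  obtain ⟨L, hr, hc, hd⟩ := hL
  refine ⟨fun p => e (L (e.symm p.1, e.symm p.2)), ?_, ?_, ?_⟩
  · intro i
    have : (fun j => e (L (e.symm i, e.symm j)))
        = e ∘ (fun j => L (e.symm i, j)) ∘ e.symm := rfl
    rw [this]
    exact e.bijective.comp ((hr _).comp e.symm.bijective)
  · intro j
    have : (fun i => e (L (e.symm i, e.symm j)))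
        = e ∘ (fun i => L (i, e.symm j)) ∘ e.symm := rfl
    rw [this]
    exact e.bijective.comp ((hc _).comp e.symm.bijective)
  · intro i
    simp [hd]

end Aux

/-- For every positive integer `n ≠ 2`, there exists an idempotent Latin square of
order `n`: a Latin square `L` with `L(i,i) = i` for all `i`. -/
theorem exists_idempotent_latin_square (n : ℕ) (hn : 0 < n) (hn2 : n ≠ 2) :
    ∃ L : Fin n × Fin n → Fin n,
      (∀ i, Function.Bijective fun j => L (i, j)) ∧
      (∀ j, Function.Bijective fun i => L (i, j)) ∧
      (∀ i, L (i, i) = i) := by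
  rcases Nat.even_or_odd n with he | ho
  · -- n even, so n ≥ 4 ; use prolongation of odd case m = n - 1
    have hm3 : 3 ≤ n - 1 := by
      rcases he with ⟨k, hk⟩
      omega
    have hmodd : Odd (n - 1) := by
      rcases he with ⟨k, hk⟩
      exact ⟨k - 1, by omega⟩
    haveI : NeZero (n - 1) := ⟨by omega⟩
    have hcard : Fintype.card (Option (ZMod (n - 1))) = n := by
      simp [ZMod.card]
      omega
    exact ils_transport (Fintype.equivFinOfCardEq hcard) (ils_even hmodd hm3)
  · haveI : NeZero n := ⟨by omega⟩
    exact ils_transport (Fintype.equivFinOfCardEq (ZMod.card n)) (ils_odd ho)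
end

section
/- For every positive integer n ≠ 2, the graph K₃ × K_n (the direct/tensor product of the complete graphs K₃ and K_n) admits a triangle decomposition. -/
/-- The direct (tensor) product `K₃ × K_n` on `Fin 3 × Fin n`: vertices are adjacent iff
they differ in both coordinates. -/
def K3xKn (n : ℕ) : SimpleGraph (Fin 3 × Fin n) where
  Adj u v := u.1 ≠ v.1 ∧ u.2 ≠ v.2
  symm := ⟨fun _ _ h => ⟨h.1.symm, h.2.symm⟩⟩
  loopless := ⟨fun _ h => h.1 rfl⟩

/-- A triangle decomposition of a simple graph `G`: a set of 3-cliques such that every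
edge of `G` lies in exactly one of them. -/
def IsTriangleDecomp {V : Type*} (G : SimpleGraph V) (D : Set (Finset V)) : Prop :=
  (∀ t ∈ D, G.IsNClique 3 t) ∧
  ∀ u v, G.Adj u v → ∃! t, t ∈ D ∧ u ∈ t ∧ v ∈ t

namespace K3aux

lemma K3xKn_adj {n : ℕ} {u v : Fin 3 × Fin n} :
    (K3xKn n).Adj u v ↔ u.1 ≠ v.1 ∧ u.2 ≠ v.2 := Iff.rfl

/-- The conditions on `f` needed to build a triangle decomposition:
`f i j ∉ {i, j}` for `i ≠ j`, and injectivity in each argument (off-diagonal). -/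
def Good {V : Type*} (f : V → V → V) : Prop :=
  (∀ i j, i ≠ j → f i j ≠ i ∧ f i j ≠ j) ∧
  (∀ i j j', i ≠ j → i ≠ j' → f i j = f i j' → j = j') ∧
  (∀ i i' j, i ≠ j → i' ≠ j → f i j = f i' j → i = i')

lemma good_conj {α β : Type*} (e : α ≃ β) {g : β → β → β} (hg : Good g) :
    Good (fun i j => e.symm (g (e i) (e j))) := by
  obtain ⟨h1, h2, h3⟩ := hg
  refine ⟨fun i j hij => ?_, fun i j j' h h' heq => ?_, fun i i' j h h' heq => ?_⟩
  · have H := h1 (e i) (e j) (fun hc => hij (e.injective hc))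
    exact ⟨fun hc => H.1 ((e.symm_apply_eq).mp hc),
           fun hc => H.2 ((e.symm_apply_eq).mp hc)⟩
  · exact e.injective (h2 (e i) (e j) (e j') (fun hc => h (e.injective hc))
      (fun hc => h' (e.injective hc)) (e.symm.injective heq))
  · exact e.injective (h3 (e i) (e i') (e j) (fun hc => h (e.injective hc))
      (fun hc => h' (e.injective hc)) (e.symm.injective heq))

variable {n : ℕ}

/-- The triangle determined by `i ≠ j`. -/
def tri (f : Fin n → Fin n → Fin n) (i j : Fin n) : Finset (Fin 3 × Fin n) :=
  {((0 : Fin 3), i), ((1 : Fin 3), j), ((2 : Fin 3), f i j)}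

lemma mem_tri0 {f : Fin n → Fin n → Fin n} {i j x : Fin n} :
    ((0 : Fin 3), x) ∈ tri f i j ↔ x = i := by
  simp [tri, Prod.ext_iff, show (0 : Fin 3) ≠ 1 by decide, show (0 : Fin 3) ≠ 2 by decide]

lemma mem_tri1 {f : Fin n → Fin n → Fin n} {i j x : Fin n} :
    ((1 : Fin 3), x) ∈ tri f i j ↔ x = j := by
  simp [tri, Prod.ext_iff, show (1 : Fin 3) ≠ 0 by decide, show (1 : Fin 3) ≠ 2 by decide]

lemma mem_tri2 {f : Fin n → Fin n → Fin n} {i j x : Fin n} :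
    ((2 : Fin 3), x) ∈ tri f i j ↔ x = f i j := by
  simp [tri, Prod.ext_iff, show (2 : Fin 3) ≠ 0 by decide, show (2 : Fin 3) ≠ 1 by decide]

lemma fst_ne {a b : Fin 3} {x y : Fin n} (h : a ≠ b) : (a, x) ≠ (b, y) :=
  fun hc => h (congrArg Prod.fst hc)

/-- The candidate decomposition. -/
def D (f : Fin n → Fin n → Fin n) : Set (Finset (Fin 3 × Fin n)) :=
  {t | ∃ i j, i ≠ j ∧ t = tri f i j}

lemma tri_clique {f : Fin n → Fin n → Fin n} (hf : Good f) {i j : Fin n} (hij : i ≠ j) :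
    (K3xKn n).IsNClique 3 (tri f i j) := by
  obtain ⟨hk1, hk2⟩ := hf.1 i j hij
  constructor
  · intro u hu v hv huv
    simp only [tri, Finset.coe_insert, Set.mem_insert_iff, Finset.coe_singleton,
      Set.mem_singleton_iff] at hu hv
    rcases hu with rfl | rfl | rfl <;> rcases hv with rfl | rfl | rfl <;>
      first
        | exact absurd rfl huv
        | exact K3xKn_adj.mpr ⟨by simp, by simpa using hij⟩
        | exact K3xKn_adj.mpr ⟨by simp, by simpa using hij.symm⟩
        | exact K3xKn_adj.mpr ⟨by simp, by simpa using hk1.symm⟩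
        | exact K3xKn_adj.mpr ⟨by simp, by simpa using hk1⟩
        | exact K3xKn_adj.mpr ⟨by simp, by simpa using hk2.symm⟩
        | exact K3xKn_adj.mpr ⟨by simp, by simpa using hk2⟩
  · exact Finset.card_eq_three.mpr ⟨_, _, _, fst_ne (by decide), fst_ne (by decide),
      fst_ne (by decide), rfl⟩

lemma rowSurj {f : Fin n → Fin n → Fin n} (hf : Good f) (x y : Fin n) (h : y ≠ x) :
    ∃ j, j ≠ x ∧ f x j = y := by
  obtain ⟨h1, h2, _⟩ := hf
  let φ : {j : Fin n // j ≠ x} → {j : Fin n // j ≠ x} :=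
    fun j => ⟨f x j.1, (h1 x j.1 (Ne.symm j.2)).1⟩
  have hinj : Function.Injective φ := by
    rintro ⟨a, ha⟩ ⟨b, hb⟩ hab
    have : f x a = f x b := congrArg Subtype.val hab
    exact Subtype.ext (h2 x a b (Ne.symm ha) (Ne.symm hb) this)
  obtain ⟨⟨j, hj⟩, hφ⟩ := Finite.injective_iff_surjective.mp hinj ⟨y, h⟩
  exact ⟨j, hj, congrArg Subtype.val hφ⟩

lemma colSurj {f : Fin n → Fin n → Fin n} (hf : Good f) (x y : Fin n) (h : y ≠ x) :
    ∃ i, i ≠ x ∧ f i x = y := by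
  obtain ⟨h1, _, h3⟩ := hf
  let φ : {i : Fin n // i ≠ x} → {i : Fin n // i ≠ x} :=
    fun i => ⟨f i.1 x, (h1 i.1 x i.2).2⟩
  have hinj : Function.Injective φ := by
    rintro ⟨a, ha⟩ ⟨b, hb⟩ hab
    have : f a x = f b x := congrArg Subtype.val hab
    exact Subtype.ext (h3 a b x ha hb this)
  obtain ⟨⟨i, hi⟩, hφ⟩ := Finite.injective_iff_surjective.mp hinj ⟨y, h⟩
  exact ⟨i, hi, congrArg Subtype.val hφ⟩

lemma exu01 {f : Fin n → Fin n → Fin n} (hf : Good f) {x y : Fin n} (hxy : x ≠ y) :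
    ∃! t, t ∈ D f ∧ ((0 : Fin 3), x) ∈ t ∧ ((1 : Fin 3), y) ∈ t := by
  refine ⟨tri f x y, ⟨⟨x, y, hxy, rfl⟩, mem_tri0.mpr rfl, mem_tri1.mpr rfl⟩, ?_⟩
  rintro t ⟨⟨i, j, hij, rfl⟩, hu, hv⟩
  rw [mem_tri0] at hu
  rw [mem_tri1] at hv
  subst hu; subst hv; rfl

lemma exu02 {f : Fin n → Fin n → Fin n} (hf : Good f) {x y : Fin n} (hxy : x ≠ y) :
    ∃! t, t ∈ D f ∧ ((0 : Fin 3), x) ∈ t ∧ ((2 : Fin 3), y) ∈ t := by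
  obtain ⟨j, hjx, hj⟩ := rowSurj hf x y hxy.symm
  refine ⟨tri f x j, ⟨⟨x, j, Ne.symm hjx, rfl⟩, mem_tri0.mpr rfl, mem_tri2.mpr hj.symm⟩, ?_⟩
  rintro t ⟨⟨i, j', hij', rfl⟩, hu, hv⟩
  rw [mem_tri0] at hu
  subst hu
  rw [mem_tri2] at hv
  have : j' = j := hf.2.1 x j' j hij' (Ne.symm hjx) (hv.symm.trans hj.symm)
  subst this; rfl

lemma exu12 {f : Fin n → Fin n → Fin n} (hf : Good f) {x y : Fin n} (hxy : x ≠ y) :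
    ∃! t, t ∈ D f ∧ ((1 : Fin 3), x) ∈ t ∧ ((2 : Fin 3), y) ∈ t := by
  obtain ⟨i, hix, hi⟩ := colSurj hf x y hxy.symm
  refine ⟨tri f i x, ⟨⟨i, x, hix, rfl⟩, mem_tri1.mpr rfl, mem_tri2.mpr hi.symm⟩, ?_⟩
  rintro t ⟨⟨i', j', hij', rfl⟩, hu, hv⟩
  rw [mem_tri1] at hu
  subst hu
  rw [mem_tri2] at hv
  have : i' = i := hf.2.2 i' i x hij' hix (hv.symm.trans hi.symm)
  subst this; rfl

lemma swap_exu {α : Type*} {P Q R : α → Prop} (h : ∃! t, P t ∧ Q t ∧ R t) :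
    ∃! t, P t ∧ R t ∧ Q t := by
  obtain ⟨t, ⟨hp, hq, hr⟩, hu⟩ := h
  exact ⟨t, ⟨hp, hr, hq⟩, fun t' ⟨p, r, q⟩ => hu t' ⟨p, q, r⟩⟩

lemma decomp_of_good (f : Fin n → Fin n → Fin n) (hf : Good f) :
    ∃ D' : Set (Finset (Fin 3 × Fin n)), IsTriangleDecomp (K3xKn n) D' := by
  refine ⟨D f, fun t ht => ?_, fun u v huv => ?_⟩
  · obtain ⟨i, j, hij, rfl⟩ := ht
    exact tri_clique hf hij
  · obtain ⟨a, x⟩ := u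
    obtain ⟨b, y⟩ := v
    obtain ⟨hab, hxy⟩ := K3xKn_adj.mp huv
    simp only at hab hxy
    fin_cases a <;> fin_cases b <;>
      first
        | exact absurd rfl hab
        | exact exu01 hf hxy
        | exact exu02 hf hxy
        | exact exu12 hf hxy
        | exact swap_exu (exu01 hf hxy.symm)
        | exact swap_exu (exu02 hf hxy.symm)
        | exact swap_exu (exu12 hf hxy.symm)

/-! ### Constructions of good functions -/

section ZModFacts

variable {m : ℕ} [NeZero m] (hm : Odd m)

lemma two_mul_inv (hm : Odd m) : (2 : ZMod m) * (2 : ZMod m)⁻¹ = 1 := by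
  apply ZMod.mul_inv_of_unit
  have : IsUnit ((2 : ℕ) : ZMod m) :=
    (ZMod.isUnit_iff_coprime 2 m).mpr (Nat.coprime_two_left.mpr hm)
  simpa using this

lemma cancel_half (hm : Odd m) {a b : ZMod m}
    (h : a * (2 : ZMod m)⁻¹ = b * (2 : ZMod m)⁻¹) : a = b := by
  have h1 : (2 : ZMod m)⁻¹ * 2 = 1 := by rw [mul_comm]; exact two_mul_inv hm
  calc a = a * (2 : ZMod m)⁻¹ * 2 := by rw [mul_assoc, h1, mul_one]
    _ = b * (2 : ZMod m)⁻¹ * 2 := by rw [h]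
    _ = b := by rw [mul_assoc, h1, mul_one]

lemma dbl_half (hm : Odd m) (a : ZMod m) : (a + a) * (2 : ZMod m)⁻¹ = a := by
  rw [← two_mul, mul_comm (2 : ZMod m) a, mul_assoc, two_mul_inv hm, mul_one]

end ZModFacts

lemma good_odd (m : ℕ) [NeZero m] (hm : Odd m) :
    Good (fun i j : ZMod m => (i + j) * (2 : ZMod m)⁻¹) := by
  refine ⟨fun i j hij => ⟨fun hc => ?_, fun hc => ?_⟩,
    fun i j j' _ _ heq => ?_, fun i i' j _ _ heq => ?_⟩
  · exact hij (add_left_cancel (cancel_half hm (hc.trans (dbl_half hm i).symm))).symm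
  · exact hij (add_right_cancel (cancel_half hm (hc.trans (dbl_half hm j).symm)))
  · exact add_left_cancel (cancel_half hm heq)
  · exact add_right_cancel (cancel_half hm heq)

/-- The prolongation construction: an idempotent-style quasigroup of even order
`m + 1` built from the odd-order one on `ZMod m`. -/
def gEven (m : ℕ) : Option (ZMod m) → Option (ZMod m) → Option (ZMod m)
  | some x, some y => if y = x + 1 then none else some ((x + y) * (2 : ZMod m)⁻¹)
  | some x, none => some (x + (2 : ZMod m)⁻¹)
  | none, some y => some (y - (2 : ZMod m)⁻¹)
  | none, none => none

lemma good_even (m : ℕ) [NeZero m] (hm : Odd m) (hm1 : 1 < m) :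
    Good (gEven m) := by
  haveI : Fact (1 < m) := ⟨hm1⟩
  have hinv2 : ((2 : ZMod m)⁻¹ : ZMod m) ≠ 0 := by
    intro hc
    have := two_mul_inv (m := m) hm
    rw [hc, mul_zero] at this
    exact zero_ne_one this
  -- auxiliary computations
  have key1 : ∀ x : ZMod m, (x + (x + 1)) * (2 : ZMod m)⁻¹ = x + (2 : ZMod m)⁻¹ := by
    intro x
    rw [← add_assoc, add_mul, one_mul, dbl_half hm]
  have key2 : ∀ y : ZMod m, ((y - 1) + y) * (2 : ZMod m)⁻¹ = y - (2 : ZMod m)⁻¹ := by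
    intro y
    have : (y - 1) + y = (y + y) - 1 := by ring
    rw [this, sub_mul, one_mul, dbl_half hm]
  refine ⟨?_, ?_, ?_⟩
  · -- P1
    rintro (_ | x) (_ | y) hij
    · exact absurd rfl hij
    · exact ⟨by simp [gEven], fun hc => by
        have : y - (2 : ZMod m)⁻¹ = y := Option.some.inj hc
        exact hinv2 (by linear_combination y - this)⟩
    · exact ⟨fun hc => by
        have : x + (2 : ZMod m)⁻¹ = x := Option.some.inj hc
        exact hinv2 (by linear_combination this - x), by simp [gEven]⟩
    · have hxy : x ≠ y := fun hc => hij (by rw [hc])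
      simp only [gEven]
      split
      · exact ⟨by simp, by simp⟩
      · constructor
        · intro hc
          have h := Option.some.inj hc
          exact hxy (add_left_cancel (cancel_half hm (h.trans (dbl_half hm x).symm))).symm
        · intro hc
          have h := Option.some.inj hc
          exact hxy (add_right_cancel (cancel_half hm (h.trans (dbl_half hm y).symm)))
  · -- P2 : row injectivity
    rintro (_ | x) (_ | y) (_ | y') h h' heq
    · exact absurd rfl h
    · exact absurd rfl h
    · exact absurd rfl h'
    · -- row none : both some
      simp only [gEven, Option.some.injEq] at heq
      rw [sub_left_inj] at heq
      rw [heq]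
    · rfl
    · -- row some x : none vs some y'
      exfalso
      simp only [gEven] at heq
      split at heq
      · exact nomatch heq
      · rename_i hne
        have h2 := Option.some.inj heq
        exact hne (add_left_cancel (cancel_half hm (h2.symm.trans (key1 x).symm)))
    · -- row some x : some y vs none
      exfalso
      simp only [gEven] at heq
      split at heq
      · exact nomatch heq
      · rename_i hne
        have h2 := Option.some.inj heq
        exact hne (add_left_cancel (cancel_half hm (h2.trans (key1 x).symm)))
    · -- both some
      simp only [gEven] at heq
      split at heq <;> split at heq
      · rename_i e1 e2; rw [e1, e2]
      · exact nomatch heq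
      · exact nomatch heq
      · have h2 := Option.some.inj heq
        rw [add_left_cancel (cancel_half hm h2)]
  · -- P3 : column injectivity
    rintro (_ | x) (_ | x') (_ | y) h h' heq
    · exact absurd rfl h
    · rfl
    · exact absurd rfl h
    · -- column some y : none vs some x'
      exfalso
      simp only [gEven] at heq
      split at heq
      · exact nomatch heq
      · rename_i hne
        have h2 := Option.some.inj heq
        have hx : x' = y - 1 :=
          add_right_cancel (cancel_half hm (h2.symm.trans (key2 y).symm))
        exact hne (by rw [hx]; ring)
    · exact absurd rfl h'
    · -- column some y : some x vs none
      exfalso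
      simp only [gEven] at heq
      split at heq
      · exact nomatch heq
      · rename_i hne
        have h2 := Option.some.inj heq
        have hx : x = y - 1 :=
          add_right_cancel (cancel_half hm (h2.trans (key2 y).symm))
        exact hne (by rw [hx]; ring)
    · -- column none : both some
      simp only [gEven, Option.some.injEq] at heq
      rw [add_left_inj] at heq
      rw [heq]
    · -- both some
      simp only [gEven] at heq
      split at heq <;> split at heq
      · rename_i e1 e2; rw [e1] at e2; rw [add_right_cancel e2]
      · exact nomatch heq
      · exact nomatch heq
      · have h2 := Option.some.inj heq
        rw [add_right_cancel (cancel_half hm h2)]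

end K3aux

/-- For every positive integer `n ≠ 2`, the graph `K₃ × K_n` admits a triangle
decomposition. -/
theorem K3xKn_triangle_decomp (n : ℕ) (hn : 0 < n) (hn2 : n ≠ 2) :
    ∃ D : Set (Finset (Fin 3 × Fin n)), IsTriangleDecomp (K3xKn n) D := by
  rcases Nat.even_or_odd n with he | ho
  · -- even case
    obtain ⟨k, hk⟩ := he
    obtain ⟨m, rfl⟩ : ∃ m, n = m + 1 := ⟨n - 1, by omega⟩
    have hmodd : Odd m := by
      refine Nat.odd_iff.mpr ?_
      omega
    haveI : NeZero m := ⟨by omega⟩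
    have hm1 : 1 < m := by omega
    have e : Fin (m + 1) ≃ Option (ZMod m) :=
      finSuccEquivLast.trans
        (Equiv.optionCongr (Fintype.equivFinOfCardEq (ZMod.card m)).symm)
    exact K3aux.decomp_of_good _ (K3aux.good_conj e (K3aux.good_even m hmodd hm1))
  · haveI : NeZero n := ⟨hn.ne'⟩
    have e : Fin n ≃ ZMod n := (Fintype.equivFinOfCardEq (ZMod.card n)).symm
    exact K3aux.decomp_of_good _ (K3aux.good_conj e (K3aux.good_odd n ho))
end

section
/- Suppose the edge set of a simple graph G is partitioned into subgraphs G₁, ..., G_b such that each Gᵢ admits a triangle decomposition and each Gᵢ admits an assignment of edge multiplicities 0, 1, ..., |E(Gᵢ)|−1 (in some order) for which the resulting multigraph decomposes into triangles. Then G admits an assignment of edge multiplicities 0, 1, ..., |E(G)|−1 (in some order) for which the resulting multigraph decomposes into triangles. -/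
open scoped Classical

/-- The multiset of edges of a simple graph on a finite vertex type. -/
noncomputable def edgeMS {V : Type*} [Fintype V] (G : SimpleGraph V) : Multiset (Sym2 V) :=
  (Finset.univ.filter fun e : Sym2 V => e ∈ G.edgeSet).val

/-- `w` is a member of `Δ_a(G)`: the edge multiplicities `w e`, over the edges of `G`,
are exactly `a, a+1, ..., a + |E(G)| − 1` in some order, and the resulting multigraph
decomposes into triangles of `G` (each triangle contributing 1 to each of its 3 edges). -/
noncomputable def InDelta {V : Type*} [Fintype V] (G : SimpleGraph V) (a : ℕ)
    (w : Sym2 V → ℕ) : Prop :=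
  (edgeMS G).map w = (Multiset.range (Multiset.card (edgeMS G))).map (a + ·) ∧
  ∃ T : Multiset (Finset V),
    (∀ t ∈ T, G.IsNClique 3 t) ∧
    ∀ e ∈ edgeMS G, w e = Multiset.card (T.filter fun t => ∀ v ∈ e, v ∈ t)

/-- The simple graph `G` itself decomposes into triangles (each edge lies in exactly one
triangle of the decomposition). -/
noncomputable def HasTriDecomp {V : Type*} [Fintype V] (G : SimpleGraph V) : Prop :=
  ∃ T : Multiset (Finset V),
    (∀ t ∈ T, G.IsNClique 3 t) ∧
    ∀ e ∈ edgeMS G, Multiset.card (T.filter fun t => ∀ v ∈ e, v ∈ t) = 1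

lemma mem_edgeMS {V : Type*} [Fintype V] {G : SimpleGraph V} {e : Sym2 V} :
    e ∈ edgeMS G ↔ e ∈ G.edgeSet := by
  simp [edgeMS]

lemma nodup_edgeMS {V : Type*} [Fintype V] (G : SimpleGraph V) : (edgeMS G).Nodup :=
  (Finset.univ.filter fun e : Sym2 V => e ∈ G.edgeSet).nodup

/-- sums of shifted ranges over a prefix-sum pattern give a full range -/
lemma range_sum_parts (m : ℕ → ℕ) : ∀ n : ℕ,
    ∑ i ∈ Finset.range n,
        (Multiset.range (m i)).map ((∑ j ∈ Finset.range i, m j) + ·) =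
      Multiset.range (∑ i ∈ Finset.range n, m i) := by
  intro n
  induction n with
  | zero => simp
  | succ n ih =>
    rw [Finset.sum_range_succ, Finset.sum_range_succ, Multiset.range_add, ← ih]

lemma finsum_map {ι α β : Type*} (t : Finset ι) (M : ι → Multiset α) (f : α → β) :
    (∑ i ∈ t, M i).map f = ∑ i ∈ t, (M i).map f := by
  classical
  induction t using Finset.induction_on with
  | empty => simp
  | insert _ _ h ih => rw [Finset.sum_insert h, Finset.sum_insert h, Multiset.map_add, ih]

lemma finsum_filter {ι α : Type*} (p : α → Prop) [DecidablePred p] (t : Finset ι)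
    (M : ι → Multiset α) :
    (∑ i ∈ t, M i).filter p = ∑ i ∈ t, (M i).filter p := by
  classical
  induction t using Finset.induction_on with
  | empty => simp
  | insert _ _ h ih => rw [Finset.sum_insert h, Finset.sum_insert h, Multiset.filter_add, ih]

/-- If the edge set of a simple graph `G` is partitioned into subgraphs `G₁, ..., G_b`,
each of which admits a triangle decomposition and satisfies `Δ₀(Gᵢ) ≠ ∅`, then
`Δ₀(G) ≠ ∅`. -/
theorem delta_zero_of_edge_decomposition {V : Type*} [Fintype V]
    (G : SimpleGraph V) (b : ℕ) (Gs : Fin b → SimpleGraph V)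
    (hsub : ∀ i, Gs i ≤ G)
    (hpart : ∀ u v, G.Adj u v → ∃! i, (Gs i).Adj u v)
    (htri : ∀ i, HasTriDecomp (Gs i))
    (hdelta : ∀ i, ∃ w, InDelta (Gs i) 0 w) :
    ∃ w, InDelta G 0 w := by
  classical
  choose ws hws using hdelta
  choose Ds hDs1 hDs2 using htri
  -- uniqueness of the part containing an edge
  have huniq : ∀ e ∈ G.edgeSet, ∃! i, e ∈ (Gs i).edgeSet := by
    intro e he
    induction e with
    | _ u v =>
      rw [SimpleGraph.mem_edgeSet] at he
      obtain ⟨i, hi, hu⟩ := hpart u v he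
      exact ⟨i, by simpa using hi, fun j hj => hu j (by simpa using hj)⟩
  -- part sizes and prefix sums
  set m : ℕ → ℕ := fun k => if h : k < b then Multiset.card (edgeMS (Gs ⟨k, h⟩)) else 0 with hm
  have hmi : ∀ i : Fin b, m (i : ℕ) = Multiset.card (edgeMS (Gs i)) := by
    intro i; simp [hm, i.isLt]
  set s : ℕ → ℕ := fun k => ∑ j ∈ Finset.range k, m j with hs
  -- the edge multiset of G is the disjoint union of those of the parts
  have hA : edgeMS G = ∑ i : Fin b, edgeMS (Gs i) := by
    refine Multiset.ext.mpr fun e => ?_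
    rw [Multiset.count_sum']
    by_cases he : e ∈ G.edgeSet
    · obtain ⟨i, hi, hu⟩ := huniq e he
      rw [Multiset.count_eq_one_of_mem (nodup_edgeMS G) (mem_edgeMS.mpr he)]
      rw [Finset.sum_eq_single i]
      · rw [Multiset.count_eq_one_of_mem (nodup_edgeMS (Gs i)) (mem_edgeMS.mpr hi)]
      · intro j _ hj
        rw [Multiset.count_eq_zero]
        intro hmem
        exact hj (hu j (mem_edgeMS.mp hmem))
      · intro h; exact absurd (Finset.mem_univ i) h
    · rw [Multiset.count_eq_zero.mpr (fun hmem => he (mem_edgeMS.mp hmem))]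
      symm
      refine Finset.sum_eq_zero fun j _ => ?_
      rw [Multiset.count_eq_zero]
      intro hmem
      exact he (SimpleGraph.edgeSet_mono (hsub j) (mem_edgeMS.mp hmem))
  -- define the weight function
  set w : Sym2 V → ℕ :=
    fun e => ∑ i : Fin b, if e ∈ (Gs i).edgeSet then s (i : ℕ) + ws i e else 0 with hw
  -- w on edges of part i
  have hwB : ∀ (i : Fin b), ∀ e ∈ (Gs i).edgeSet, w e = s (i : ℕ) + ws i e := by
    intro i e he
    show (∑ j : Fin b, if e ∈ (Gs j).edgeSet then s (j : ℕ) + ws j e else 0) = _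
    rw [Finset.sum_eq_single i]
    · rw [if_pos he]
    · intro j _ hj
      rw [if_neg]
      intro hmem
      obtain ⟨k, _, hu⟩ := huniq e (SimpleGraph.edgeSet_mono (hsub i) he)
      exact hj ((hu j hmem).trans (hu i he).symm)
    · intro h; exact absurd (Finset.mem_univ i) h
  have hcard : Multiset.card (edgeMS G) = ∑ i : Fin b, m (i : ℕ) := by
    rw [hA, Multiset.card_sum]
    exact Finset.sum_congr rfl fun i _ => (hmi i).symm
  refine ⟨w, ?_, ?_⟩
  · -- the multiplicities are 0, 1, ..., N-1
    have hzero : ∀ (M : Multiset ℕ), M.map (0 + ·) = M := by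
      intro M
      have : (fun x => 0 + x) = id := by funext x; simp
      rw [this, Multiset.map_id]
    rw [hzero, hcard, Fin.sum_univ_eq_sum_range m b, ← range_sum_parts m b,
      hA, finsum_map,
      ← Fin.sum_univ_eq_sum_range
        (fun k => (Multiset.range (m k)).map ((∑ j ∈ Finset.range k, m j) + ·)) b]
    refine Finset.sum_congr rfl fun i _ => ?_
    have h1 : (edgeMS (Gs i)).map w = (edgeMS (Gs i)).map (fun e => s (i : ℕ) + ws i e) :=
      Multiset.map_congr rfl fun e he => hwB i e (mem_edgeMS.mp he)
    rw [h1]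
    have h2 : (edgeMS (Gs i)).map (fun e => s (i : ℕ) + ws i e) =
        ((edgeMS (Gs i)).map (ws i)).map (s (i : ℕ) + ·) :=
      (Multiset.map_map _ _ _).symm
    rw [h2, (hws i).1, hzero, hmi i]
  · -- the triangle decomposition
    choose Ts hTs1 hTs2 using fun i => (hws i).2
    refine ⟨∑ i : Fin b, (Ts i + s (i : ℕ)  • Ds i), ?_, ?_⟩
    · intro t ht
      rw [Multiset.mem_sum] at ht
      obtain ⟨i, _, hti⟩ := ht
      rw [Multiset.mem_add] at hti
      rcases hti with h | h
      · exact (hTs1 i t h).mono (hsub i)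
      · exact (hDs1 i t (Multiset.mem_of_mem_nsmul h)).mono (hsub i)
    · intro e he
      have heG : e ∈ G.edgeSet := mem_edgeMS.mp he
      obtain ⟨i, hi, hu⟩ := huniq e heG
      -- a triangle of part j containing both endpoints of e forces e ∈ Gs j
      have hedge : ∀ (j : Fin b) (t : Finset V), (Gs j).IsNClique 3 t →
          (∀ v ∈ e, v ∈ t) → e ∈ (Gs j).edgeSet := by
        intro j t hcl hvt
        revert heG hvt
        induction e with
        | _ u v =>
          intro heG hvt
          rw [SimpleGraph.mem_edgeSet] at heG ⊢
          exact hcl.1 (hvt u (by simp)) (hvt v (by simp)) heG.ne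
      rw [finsum_filter, Multiset.card_sum]
      rw [Finset.sum_eq_single i]
      · rw [Multiset.filter_add, Multiset.card_add, Multiset.filter_nsmul, Multiset.card_nsmul]
        rw [← hTs2 i e (mem_edgeMS.mpr hi), hDs2 i e (mem_edgeMS.mpr hi), mul_one,
          hwB i e hi, add_comm]
      · intro j _ hj
        have hnone : ∀ t ∈ Ts j + s (j : ℕ) • Ds j, ¬ (∀ v ∈ e, v ∈ t) := by
          intro t ht hvt
          rw [Multiset.mem_add] at ht
          have hcl : (Gs j).IsNClique 3 t := by
            rcases ht with h | h
            · exact hTs1 j t h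
            · exact hDs1 j t (Multiset.mem_of_mem_nsmul h)
          exact hj (hu j (hedge j t hcl hvt))
        rw [Multiset.filter_eq_nil.mpr hnone]
        simp
      · intro h; exact absurd (Finset.mem_univ i) h
end
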